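/- Let V ⊆ ℝmax^n be a max-plus subsemimodule stable under directed sups and filtered infs, and for x ∈ ℝmax^n define the projection P_V(x) as the componentwise supremum of {v ∈ V : v ≤ x}. Then P_V(x) ∈ V for every x ∈ ℝmax^n, and P_V preserves directed sups and filtered infs: for every nonempty directed subset D ⊆ ℝmax^n bounded from above, P_V(sup D) = sup of {P_V(x) : x ∈ D}; and for every nonempty filtered subset F ⊆ ℝmax^n, P_V(inf F) = inf of {P_V(x) : x ∈ F}. -/

import Mathlib

noncomputable section

/-- `ℝmax = ℝ ∪ {-∞}`, the max-plus semifield. -/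
abbrev Rmax := WithBot ℝ

/-- a max-plus subsemimodule of `ℝmax^n`: contains the bottom vector, stable
under componentwise max and under addition of scalars. -/
def MPSubmodule {n : ℕ} (V : Set (Fin n → Rmax)) : Prop :=
  (fun _ => ⊥) ∈ V ∧ (∀ x ∈ V, ∀ y ∈ V, x ⊔ y ∈ V) ∧
    (∀ x ∈ V, ∀ lam : Rmax, (fun i => x i + lam) ∈ V)

/-- stability under sups of bounded directed subsets. -/
def DirStable {n : ℕ} (C : Set (Fin n → Rmax)) : Prop :=
  ∀ D ⊆ C, D.Nonempty → DirectedOn (· ≤ ·) D → BddAbove D → sSup D ∈ C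

/-- stability under infs of filtered subsets. -/
def FiltStable {n : ℕ} (C : Set (Fin n → Rmax)) : Prop :=
  ∀ F ⊆ C, F.Nonempty → DirectedOn (· ≥ ·) F → sInf F ∈ C

/-- the canonical projection onto `V`: `P_V(x) = sup {v ∈ V : v ≤ x}`. -/
def projV {n : ℕ} (V : Set (Fin n → Rmax)) (x : Fin n → Rmax) : Fin n → Rmax :=
  sSup {v | v ∈ V ∧ v ≤ x}

/-- finite subsets of a directed set have upper bounds in the set -/
lemma my_finset_le {α : Type*} [Preorder α] {D : Set α} (hne : D.Nonempty)
    (hd : DirectedOn (· ≤ ·) D) {ι : Type*} (s : Finset ι) (g : ι → α)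
    (hg : ∀ i ∈ s, g i ∈ D) : ∃ z ∈ D, ∀ i ∈ s, g i ≤ z := by
  classical
  induction s using Finset.induction with
  | empty => exact ⟨hne.choose, hne.choose_spec, by simp⟩
  | insert _ _ hnot ih =>
    rename_i a t
    obtain ⟨z, hz, hzt⟩ := ih (fun i hi => hg i (Finset.mem_insert_of_mem hi))
    obtain ⟨w, hw, haw, hzw⟩ := hd _ (hg a (Finset.mem_insert_self a t)) _ hz
    exact ⟨w, hw, fun i hi => by
      rcases Finset.mem_insert.1 hi with h | h
      · exact h ▸ haw
      · exact (hzt i h).trans hzw⟩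

lemma eps_le {a b : Rmax} (h : ∀ ε : ℝ, 0 < ε → a + ↑(-ε) ≤ b) : a ≤ b := by
  induction a using WithBot.recBotCoe with
  | bot => exact bot_le
  | coe r =>
    have h1 : (↑(r - 1) : Rmax) ≤ b := by
      have := h 1 one_pos
      rwa [← WithBot.coe_add, show r + (-1) = r - 1 by ring] at this
    induction b using WithBot.recBotCoe with
    | bot => exact absurd h1 (by simp)
    | coe s =>
      refine WithBot.coe_le_coe.2 ?_
      refine le_of_forall_pos_le_add fun ε hε => ?_
      have := h ε hε
      rw [← WithBot.coe_add, WithBot.coe_le_coe] at this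
      linarith

lemma lt_of_lt_sSup {s : Set Rmax} (hne : s.Nonempty) {b : Rmax} (h : b < sSup s) :
    ∃ a ∈ s, b < a := by
  by_contra hc
  push_neg at hc
  exact absurd (csSup_le hne hc) (not_le.2 h)

theorem stmt12 {n : ℕ} (V : Set (Fin n → Rmax)) (hmod : MPSubmodule V)
    (hdir : DirStable V) (hfilt : FiltStable V) :
    (∀ x, projV V x ∈ V) ∧
    (∀ D : Set (Fin n → Rmax), D.Nonempty → DirectedOn (· ≤ ·) D → BddAbove D →
      projV V (sSup D) = sSup (projV V '' D)) ∧
    (∀ F : Set (Fin n → Rmax), F.Nonempty → DirectedOn (· ≥ ·) F →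
      projV V (sInf F) = sInf (projV V '' F)) := by
  obtain ⟨hbot, hsup, hlam⟩ := hmod
  set S : (Fin n → Rmax) → Set (Fin n → Rmax) := fun x => {v | v ∈ V ∧ v ≤ x} with hS
  have hSsub : ∀ x, S x ⊆ V := fun x v hv => hv.1
  have hSne : ∀ x, (S x).Nonempty := fun x => ⟨(fun _ => ⊥), hbot, fun i => bot_le⟩
  have hSdir : ∀ x, DirectedOn (· ≤ ·) (S x) := by
    intro x v hv w hw
    exact ⟨v ⊔ w, ⟨hsup v hv.1 w hw.1, sup_le hv.2 hw.2⟩, le_sup_left, le_sup_right⟩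
  have hSbdd : ∀ x, BddAbove (S x) := fun x => ⟨x, fun v hv => hv.2⟩
  -- projV maps into V
  have h1 : ∀ x, projV V x ∈ V := fun x =>
    hdir (S x) (hSsub x) (hSne x) (hSdir x) (hSbdd x)
  -- basic properties of projV
  have hle : ∀ x, projV V x ≤ x := fun x => csSup_le (hSne x) fun v hv => hv.2
  have hge : ∀ x v, v ∈ V → v ≤ x → v ≤ projV V x := fun x v hv hvx =>
    le_csSup (hSbdd x) ⟨hv, hvx⟩
  have hmono : ∀ x y, x ≤ y → projV V x ≤ projV V y := fun x y hxy =>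
    csSup_le_csSup (hSbdd y) (hSne x) fun v hv => ⟨hv.1, hv.2.trans hxy⟩
  refine ⟨h1, ?_, ?_⟩
  · -- directed sups
    intro D hDne hDdir hDbdd
    have himne : (projV V '' D).Nonempty := hDne.image _
    refine le_antisymm ?_ ?_
    · -- hard direction: every v ∈ V with v ≤ sSup D is ≤ sSup (projV '' D)
      refine csSup_le (hSne _) fun v hv => ?_
      obtain ⟨hvV, hvle⟩ := hv
      intro i
      refine eps_le fun ε hε => ?_
      -- find for each coordinate j some x_j ∈ D with v j + (-ε) ≤ x_j j
      have hcoord : ∀ j : Fin n, ∃ x ∈ D, v j + ↑(-ε) ≤ x j := by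
        intro j
        rcases eq_or_ne (v j) ⊥ with hvj | hvj
        · obtain ⟨x, hx⟩ := hDne
          exact ⟨x, hx, by simp [hvj]⟩
        · obtain ⟨r, hvj⟩ := WithBot.ne_bot_iff_exists.1 hvj
          have h1' : (↑(r - ε) : Rmax) < v j := by
            rw [← hvj]; exact_mod_cast by linarith
          have h2' : v j ≤ sSup (Function.eval j '' D) := by
            have := hvle j
            rw [show sSup D j = ⨆ f : D, (f : Fin n → Rmax) j from sSup_apply] at this
            rw [Set.image_eq_range, sSup_range]
            exact this
          obtain ⟨a, ⟨x, hxD, rfl⟩, hlt⟩ :=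
            lt_of_lt_sSup (hDne.image _) (lt_of_lt_of_le h1' h2')
          refine ⟨x, hxD, ?_⟩
          rw [← hvj, ← WithBot.coe_add, show r + (-ε) = r - ε by ring]
          exact le_of_lt hlt
      choose g hgD hgle using hcoord
      obtain ⟨z, hzD, hz⟩ := my_finset_le hDne hDdir Finset.univ g
        (fun j _ => hgD j)
      -- v + (-ε) ≤ z, so v + (-ε) ≤ projV z ≤ sSup (projV '' D)
      have hv' : (fun j => v j + ↑(-ε)) ≤ projV V z := by
        refine hge z _ (hlam v hvV _) fun j => ?_
        exact (hgle j).trans ((hz j (Finset.mem_univ j)) j)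
      have : projV V z ≤ sSup (projV V '' D) :=
        le_csSup ⟨projV V (sSup D), by
          rintro _ ⟨x, hxD, rfl⟩
          exact hmono x (sSup D) (le_csSup hDbdd hxD)⟩ ⟨z, hzD, rfl⟩
      exact le_trans (hv' i) (this i)
    · refine csSup_le himne ?_
      rintro _ ⟨x, hxD, rfl⟩
      exact hmono x (sSup D) (le_csSup hDbdd hxD)
  · -- filtered infs
    intro F hFne hFdir
    have himne : (projV V '' F).Nonempty := hFne.image _
    refine le_antisymm ?_ ?_
    · refine le_csInf himne ?_
      rintro _ ⟨x, hxF, rfl⟩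
      exact hmono _ x (csInf_le (OrderBot.bddBelow F) hxF)
    · -- sInf (projV '' F) ∈ V and ≤ sInf F
      have himsub : projV V '' F ⊆ V := by rintro _ ⟨x, _, rfl⟩; exact h1 x
      have himdir : DirectedOn (· ≥ ·) (projV V '' F) := by
        rintro _ ⟨x, hxF, rfl⟩ _ ⟨y, hyF, rfl⟩
        obtain ⟨z, hzF, hzx, hzy⟩ := hFdir x hxF y hyF
        exact ⟨projV V z, ⟨z, hzF, rfl⟩, hmono z x hzx, hmono z y hzy⟩
      have hwV : sInf (projV V '' F) ∈ V := hfilt _ himsub himne himdir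
      have hwle : sInf (projV V '' F) ≤ sInf F := by
        refine le_csInf hFne fun x hxF => ?_
        exact le_trans (csInf_le (OrderBot.bddBelow _) ⟨x, hxF, rfl⟩) (hle x)
      exact hge _ _ hwV hwle

end
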